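/- If the weights are non-increasing, W_1 ≥ W_2 ≥ … ≥ W_J > 0, then log C_W(m,J) = log(Σ_{j=1}^{J−m} W_j) + log(Σ_{j=J−m+1}^{J} 1/W_j), and the first term is bounded above by log(J−m) + log W_1. -/
import Mathlib

open Finset

lemma strictMono_val_le {k : ℕ} (g : Fin k → ℕ) (hg : StrictMono g) (i : Fin k) :
    (i : ℕ) ≤ g i := by
  induction' h : (i : ℕ) with n ih generalizing i
  · exact Nat.zero_le _
  · have hn : n < k := by omega
    have hlt : (⟨n, hn⟩ : Fin k) < i := by simp [Fin.lt_def, h]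
    have h1 := hg hlt
    have h2 := ih ⟨n, hn⟩ rfl
    omega

lemma sum_le_head {J k : ℕ} (f : Fin J → ℝ) (hf : Antitone f)
    (S : Finset (Fin J)) (hS : S.card = k) :
    ∑ j ∈ S, f j ≤ ∑ j ∈ univ.filter (fun j : Fin J => (j : ℕ) < k), f j := by
  have hkJ : k ≤ J := by
    have := card_le_card (subset_univ S); simpa [hS] using this
  set e := S.orderEmbOfFin hS with he
  have hSim : S = Finset.image (fun i => e i) univ := by
    apply Finset.coe_injective
    simp [Finset.coe_image, Set.image_univ, he, Finset.range_orderEmbOfFin]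
  have hfilter : (univ.filter (fun j : Fin J => (j : ℕ) < k))
      = Finset.image (Fin.castLE hkJ) univ := by
    ext x
    simp only [mem_filter, mem_univ, true_and, Finset.mem_image]
    constructor
    · intro hx; exact ⟨⟨x, hx⟩, rfl⟩
    · rintro ⟨i, rfl⟩; exact i.2
  rw [hSim, Finset.sum_image (fun a _ b _ h => e.injective h),
    hfilter, Finset.sum_image (fun a _ b _ h => Fin.castLE_injective hkJ h)]
  apply Finset.sum_le_sum
  intro i _
  apply hf
  have : (i : ℕ) ≤ ((e i : Fin J) : ℕ) :=
    strictMono_val_le (fun i => ((e i : Fin J) : ℕ))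
      (fun a b hab => by exact_mod_cast e.strictMono hab) i
  exact this

lemma sum_le_tail {J m : ℕ} (f : Fin J → ℝ) (hf : Monotone f)
    (S : Finset (Fin J)) (hS : S.card = m) :
    ∑ j ∈ S, f j ≤ ∑ j ∈ univ.filter (fun j : Fin J => J - m ≤ (j : ℕ)), f j := by
  have hanti : Antitone (fun j : Fin J => f j.rev) := by
    intro a b hab; exact hf (by simpa using Fin.rev_le_rev.mpr hab)
  have h1 := sum_le_head (fun j : Fin J => f j.rev) hanti (S.image Fin.rev)
    (by rw [card_image_of_injective _ Fin.rev_injective, hS])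
  have hL : ∑ j ∈ S.image Fin.rev, f j.rev = ∑ j ∈ S, f j := by
    rw [Finset.sum_image (fun a _ b _ h => Fin.rev_injective h)]
    simp
  have hR : ∑ j ∈ univ.filter (fun j : Fin J => (j : ℕ) < m), f j.rev
      = ∑ j ∈ univ.filter (fun j : Fin J => J - m ≤ (j : ℕ)), f j := by
    have himg : univ.filter (fun j : Fin J => J - m ≤ (j : ℕ))
        = (univ.filter (fun j : Fin J => (j : ℕ) < m)).image Fin.rev := by
      ext x
      simp only [Finset.mem_image, mem_filter, mem_univ, true_and]
      constructor
      · intro hx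
        refine ⟨x.rev, ?_, by simp⟩
        have := x.2
        simp only [Fin.val_rev]
        omega
      · rintro ⟨j, hj, rfl⟩
        have := j.2
        simp only [Fin.val_rev]
        omega
    rw [himg, Finset.sum_image (fun a _ b _ h => Fin.rev_injective h)]
  rw [hL, hR] at h1
  exact h1

noncomputable def CW (J m : ℕ) (hm : m ≤ J) (W : Fin J → ℝ) : ℝ :=
  ((Finset.univ : Finset (Fin J)).powersetCard m).sup'
    (Finset.powersetCard_nonempty.mpr (by simpa using hm))
    fun A => (∑ j ∈ Aᶜ, W j) * ∑ k ∈ A, (W k)⁻¹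

theorem stmt6 (J m : ℕ) [NeZero J] (hm : 0 < m) (hmJ : m < J) (W : Fin J → ℝ)
    (hpos : ∀ j, 0 < W j) (hanti : Antitone W) :
    Real.log (CW J m hmJ.le W) =
        Real.log (∑ j ∈ Finset.univ.filter fun j : Fin J => (j : ℕ) < J - m, W j) +
          Real.log (∑ j ∈ Finset.univ.filter fun j : Fin J => J - m ≤ (j : ℕ), (W j)⁻¹) ∧
      Real.log (∑ j ∈ Finset.univ.filter fun j : Fin J => (j : ℕ) < J - m, W j) ≤
        Real.log ((J : ℝ) - (m : ℝ)) + Real.log (W 0) := by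
  set A₀ : Finset (Fin J) := univ.filter (fun j : Fin J => J - m ≤ (j : ℕ)) with hA₀
  have hA₀card : A₀.card = m := by
    have : A₀ = Finset.Ici (⟨J - m, by omega⟩ : Fin J) := by
      ext x; simp [hA₀, Fin.le_def]
    rw [this, Fin.card_Ici]
    simp
    omega
  have hA₀compl : A₀ᶜ = univ.filter (fun j : Fin J => (j : ℕ) < J - m) := by
    ext x; simp [hA₀, not_le]; omega
  have hheadpos : 0 < ∑ j ∈ univ.filter (fun j : Fin J => (j : ℕ) < J - m), W j := by
    apply Finset.sum_pos (fun i _ => hpos i)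
    exact ⟨⟨0, Nat.pos_of_ne_zero (NeZero.ne J)⟩, by simp; omega⟩
  have htailpos : 0 < ∑ j ∈ univ.filter (fun j : Fin J => J - m ≤ (j : ℕ)), (W j)⁻¹ := by
    apply Finset.sum_pos (fun i _ => inv_pos.mpr (hpos i))
    exact ⟨⟨J - 1, by omega⟩, by simp; omega⟩
  have hinvmono : Monotone (fun j : Fin J => (W j)⁻¹) := by
    intro a b hab
    exact inv_anti₀ (hpos b) (hanti hab)
  have hCW : CW J m hmJ.le W = (∑ j ∈ A₀ᶜ, W j) * ∑ k ∈ A₀, (W k)⁻¹ := by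
    apply le_antisymm
    · apply Finset.sup'_le
      intro A hA
      have hAcard : A.card = m := Finset.mem_powersetCard_univ.mp hA
      have h1 : ∑ j ∈ Aᶜ, W j ≤ ∑ j ∈ A₀ᶜ, W j := by
        rw [hA₀compl]
        exact sum_le_head W hanti Aᶜ (by simp [card_compl, hAcard])
      have h2 : ∑ k ∈ A, (W k)⁻¹ ≤ ∑ k ∈ A₀, (W k)⁻¹ := by
        rw [hA₀]
        exact sum_le_tail _ hinvmono A hAcard
      exact mul_le_mul h1 h2
        (Finset.sum_nonneg fun k _ => (inv_pos.mpr (hpos k)).le)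
        (by rw [hA₀compl]; exact hheadpos.le)
    · exact Finset.le_sup' (fun A => (∑ j ∈ Aᶜ, W j) * ∑ k ∈ A, (W k)⁻¹)
        (Finset.mem_powersetCard_univ.mpr hA₀card)
  constructor
  · rw [hCW, hA₀compl, hA₀]
    exact Real.log_mul hheadpos.ne' htailpos.ne'
  · have hsum : ∑ j ∈ univ.filter (fun j : Fin J => (j : ℕ) < J - m), W j
        ≤ ((J : ℝ) - (m : ℝ)) * W 0 := by
      have hcard : (univ.filter (fun j : Fin J => (j : ℕ) < J - m)).card = J - m := by
        have : univ.filter (fun j : Fin J => (j : ℕ) < J - m)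
            = Finset.Iio (⟨J - m, by omega⟩ : Fin J) := by
          ext x; simp [Fin.lt_def]
        rw [this, Fin.card_Iio]
      calc ∑ j ∈ univ.filter (fun j : Fin J => (j : ℕ) < J - m), W j
          ≤ ∑ j ∈ univ.filter (fun j : Fin J => (j : ℕ) < J - m), W 0 :=
            Finset.sum_le_sum fun j _ => hanti (Fin.zero_le j)
        _ = ((J - m : ℕ) : ℝ) * W 0 := by rw [Finset.sum_const, hcard]; simp
        _ = ((J : ℝ) - (m : ℝ)) * W 0 := by
            congr 1; push_cast [hmJ.le]; ring
    have hJm : (0 : ℝ) < (J : ℝ) - (m : ℝ) := by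
      have : (m : ℝ) < (J : ℝ) := by exact_mod_cast hmJ
      linarith
    calc Real.log (∑ j ∈ univ.filter (fun j : Fin J => (j : ℕ) < J - m), W j)
        ≤ Real.log (((J : ℝ) - (m : ℝ)) * W 0) := Real.log_le_log hheadpos hsum
      _ = Real.log ((J : ℝ) - (m : ℝ)) + Real.log (W 0) :=
          Real.log_mul hJm.ne' (hpos 0).ne'
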